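/- Fix l > 0 and m ≥ 1. For λ = (λ₁,…,λ_m) with λ₁ > ⋯ > λ_m > 0 and w = (w₁,…,w_{m−1}) with w_j > 0 and Σ_{j=1}^{m−1} w_j < 1, set w_m = 1 − Σ_{j=1}^{m−1} w_j and define complex numbers κ₀,…,κ_{2m} as the coefficients of Σ_{j=0}^{2m} κ_j z^j = ∏_{j=1}^m (z² − λ_j²) − i·l·z·Σ_{j=1}^m w_j ∏_{k≠j} (z² − λ_k²). (This polynomial equals det(zI − 𝒥 − i·l·I_{1×1}) when (λ_j, w_j) are the spectral data of the corresponding 2m×2m zero-diagonal Jacobi matrix 𝒥.) Then the even-index coefficients κ_{2j} are real and the odd-index coefficients κ_{2j+1} are purely imaginary, and the Jacobian determinant of the map (λ₁,…,λ_m, w₁,…,w_{m−1}) ↦ (Re κ₀, Im κ₁, Re κ₂, …, Im κ_{2m−3}, Re κ_{2m−2}) satisfies |det ∂(Re κ₀, Im κ₁, …, Re κ_{2m−2})/∂(λ₁,…,λ_m,w₁,…,w_{m−1})| = 2^m l^{m−1} ∏_{j=1}^m λ_j · ∏_{1≤j<k≤m} |λ_j² − λ_k²|². -/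

import Mathlib

open MeasureTheory Matrix Polynomial Finset

/-- The polynomial `∏ (z² - λ_j²) - i·l·z·Σ_j w_j ∏_{k≠j} (z² - λ_k²)`, which is
`det(zI - 𝒥 - i·l·I₁ₓ₁)` when `(λ_j, w_j)` are the spectral data of the corresponding
`2m × 2m` zero-diagonal Jacobi matrix `𝒥`. -/
noncomputable def kappaPolyHC (m : ℕ) (l : ℝ) (lam : Fin m → ℝ) (w : Fin m → ℝ) :
    Polynomial ℂ :=
  ∏ j : Fin m, (X ^ 2 - C ((lam j : ℂ) ^ 2)) -
    C (Complex.I * (l : ℂ)) * X *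
      ∑ j : Fin m, C ((w j : ℂ)) * ∏ k ∈ Finset.univ.erase j, (X ^ 2 - C ((lam k : ℂ) ^ 2))

/-- `kappaPolyHC` as a function of a single vector `x ∈ ℝ^(2m-1)` of variables
`(λ₁,…,λ_m, w₁,…,w_{m-1})`, with `w_m := 1 - Σ_{j<m} w_j`. -/
noncomputable def kappaMapHC (m : ℕ) (l : ℝ) (x : Fin (2 * m - 1) → ℝ) : Polynomial ℂ :=
  kappaPolyHC m l
    (fun j : Fin m => x ⟨(j : ℕ), by have := j.isLt; omega⟩)
    (fun j : Fin m => if h : (j : ℕ) < m - 1 then x ⟨m + (j : ℕ), by omega⟩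
      else 1 - ∑ k : Fin (m - 1), x ⟨m + (k : ℕ), by have := k.isLt; omega⟩)

/-- The real vector `(Re κ₀, Im κ₁, Re κ₂, …)`: component `i` is `Re κ_i` for even `i`
and `Im κ_i` for odd `i`. -/
noncomputable def kappaReImH (m : ℕ) (l : ℝ) (x : Fin (2 * m - 1) → ℝ)
    (i : Fin (2 * m - 1)) : ℝ :=
  if (i : ℕ) % 2 = 0 then ((kappaMapHC m l x).coeff (i : ℕ)).re
  else ((kappaMapHC m l x).coeff (i : ℕ)).im

namespace JacNH

noncomputable def Pm (m : ℕ) (lam : Fin m → ℝ) (j : Fin m) : Polynomial ℝ :=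
  ∏ k ∈ Finset.univ.erase j, (X - C (lam k ^ 2))
noncomputable def Am (m : ℕ) (lam : Fin m → ℝ) : Polynomial ℝ :=
  ∏ k : Fin m, (X - C (lam k ^ 2))
noncomputable def Bm (m : ℕ) (lam w : Fin m → ℝ) : Polynomial ℝ :=
  ∑ j : Fin m, C (w j) * Pm m lam j

noncomputable def KP (m : ℕ) (l : ℝ) (lam w : Fin m → ℝ) : Polynomial ℂ :=
  expand ℂ 2 ((Am m lam).map (algebraMap ℝ ℂ)) -
      C (Complex.I * l) * X * expand ℂ 2 ((Bm m lam w).map (algebraMap ℝ ℂ))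

lemma kappaPolyHC_eq (m : ℕ) (l : ℝ) (lam w : Fin m → ℝ) :
    kappaPolyHC m l lam w = KP m l lam w := by
  unfold kappaPolyHC KP Am Bm Pm
  rw [Polynomial.map_prod, map_prod, Polynomial.map_sum, map_sum]
  simp [Polynomial.map_sub, Polynomial.map_mul, Polynomial.map_prod, expand_X]

lemma coeff_even (m : ℕ) (l : ℝ) (lam w : Fin m → ℝ) (r : ℕ) :
    (KP m l lam w).coeff (2 * r) = ((Am m lam).coeff r : ℂ) := by
  rw [KP, Polynomial.coeff_sub, mul_assoc, coeff_C_mul,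
    Polynomial.coeff_expand two_pos]
  rw [if_pos ⟨r, rfl⟩]
  have h2 : (X * expand ℂ 2 ((Bm m lam w).map (algebraMap ℝ ℂ))).coeff (2*r) = 0 := by
    rcases Nat.eq_zero_or_pos r with rfl|hr
    · simp
    · have h3 : 2*r = (2*r - 1) + 1 := by omega
      rw [h3, Polynomial.coeff_X_mul, Polynomial.coeff_expand two_pos, if_neg (by omega)]
  rw [h2, mul_zero, sub_zero, Nat.mul_div_cancel_left _ two_pos, Polynomial.coeff_map]
  simp

lemma coeff_odd (m : ℕ) (l : ℝ) (lam w : Fin m → ℝ) (r : ℕ) :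
    (KP m l lam w).coeff (2*r+1) = -(Complex.I * l * ((Bm m lam w).coeff r : ℂ)) := by
  rw [KP, Polynomial.coeff_sub, Polynomial.coeff_expand two_pos,
    if_neg (by omega), mul_assoc, coeff_C_mul, Polynomial.coeff_X_mul,
    Polynomial.coeff_expand two_pos, if_pos ⟨r, rfl⟩, Nat.mul_div_cancel_left _ two_pos,
    Polynomial.coeff_map, zero_sub]
  simp

variable {n : ℕ}

def colL (k : Fin (n+1)) : Fin (2*(n+1)-1) := ⟨(k:ℕ), by have := k.isLt; omega⟩
def colW (j : Fin n) : Fin (2*(n+1)-1) := ⟨(n+1)+(j:ℕ), by have := j.isLt; omega⟩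
def rowE (r : Fin (n+1)) : Fin (2*(n+1)-1) := ⟨2*(r:ℕ), by have := r.isLt; omega⟩
def rowO (r : Fin n) : Fin (2*(n+1)-1) := ⟨2*(r:ℕ)+1, by have := r.isLt; omega⟩

def lamX (n : ℕ) (x : Fin (2*(n+1)-1) → ℝ) : Fin (n+1) → ℝ :=
  fun j => x ⟨(j:ℕ), by have := j.isLt; omega⟩
noncomputable def wX (n : ℕ) (x : Fin (2*(n+1)-1) → ℝ) : Fin (n+1) → ℝ :=
  fun j => if h : (j : ℕ) < n then x ⟨(n+1) + (j : ℕ), by omega⟩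
      else 1 - ∑ k : Fin n, x ⟨(n+1) + (k : ℕ), by have := k.isLt; omega⟩

lemma kappaMapHC_eq (l : ℝ) (x : Fin (2*(n+1)-1) → ℝ) :
    kappaMapHC (n+1) l x = KP (n+1) l (lamX n x) (wX n x) := by
  rw [kappaMapHC, kappaPolyHC_eq]
  rfl

lemma reim_even (l : ℝ) (x : Fin (2*(n+1)-1) → ℝ) (r : Fin (n+1)) :
    kappaReImH (n+1) l x (rowE r) = (Am (n+1) (lamX n x)).coeff (r:ℕ) := by
  have h : ((rowE r : Fin (2*(n+1)-1)) : ℕ) = 2*(r:ℕ) := rfl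
  rw [kappaReImH, h, if_pos (Nat.mul_mod_right 2 _), kappaMapHC_eq, coeff_even,
    Complex.ofReal_re]

lemma reim_odd (l : ℝ) (x : Fin (2*(n+1)-1) → ℝ) (r : Fin n) :
    kappaReImH (n+1) l x (rowO r) = -(l * (Bm (n+1) (lamX n x) (wX n x)).coeff (r:ℕ)) := by
  have h : ((rowO r : Fin (2*(n+1)-1)) : ℕ) = 2*(r:ℕ)+1 := rfl
  rw [kappaReImH, h, if_neg (by omega), kappaMapHC_eq, coeff_odd]
  simp


lemma lamX_update_colL (x : Fin (2*(n+1)-1) → ℝ) (k : Fin (n+1)) (t : ℝ) :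
    lamX n (Function.update x (colL k) t) = Function.update (lamX n x) k t := by
  funext j
  rcases eq_or_ne j k with rfl | hjk
  · have : (⟨(j:ℕ), by have := j.isLt; omega⟩ : Fin (2*(n+1)-1)) = colL j := rfl
    rw [lamX, this, Function.update_self, Function.update_self]
  · have h1 : (⟨(j:ℕ), by have := j.isLt; omega⟩ : Fin (2*(n+1)-1)) ≠ colL k := by
      simp only [colL, ne_eq, Fin.mk.injEq]
      exact fun h => hjk (Fin.ext h)
    rw [lamX, Function.update_of_ne h1, Function.update_of_ne hjk, lamX]

lemma lamX_update_colW (x : Fin (2*(n+1)-1) → ℝ) (j : Fin n) (t : ℝ) :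
    lamX n (Function.update x (colW j) t) = lamX n x := by
  funext j'
  rw [lamX, Function.update_of_ne (by simp only [colW, ne_eq, Fin.mk.injEq]; omega), lamX]

lemma Am_update (lam : Fin (n+1) → ℝ) (k : Fin (n+1)) (t : ℝ) :
    Am (n+1) (Function.update lam k t) = (X - C (t^2)) * Pm (n+1) lam k := by
  rw [Am, ← Finset.mul_prod_erase _ _ (Finset.mem_univ k), Function.update_self, Pm]
  congr 1
  refine Finset.prod_congr rfl fun j hj => ?_
  rw [Function.update_of_ne (Finset.mem_erase.mp hj).1]

lemma entry_EL (l : ℝ) (x : Fin (2*(n+1)-1) → ℝ) (r k : Fin (n+1)) :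
    deriv (fun t => kappaReImH (n+1) l (Function.update x (colL k) t) (rowE r)) (x (colL k))
      = -2 * lamX n x k * (Pm (n+1) (lamX n x) k).coeff (r:ℕ) := by
  have hfun : (fun t => kappaReImH (n+1) l (Function.update x (colL k) t) (rowE r))
      = fun t => (X * Pm (n+1) (lamX n x) k).coeff (r:ℕ)
          - t^2 * (Pm (n+1) (lamX n x) k).coeff (r:ℕ) := by
    funext t
    rw [reim_even, lamX_update_colL, Am_update, sub_mul, Polynomial.coeff_sub, coeff_C_mul]
  rw [hfun]
  have h := (((hasDerivAt_pow 2 (x (colL k))).mul_const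
      ((Pm (n+1) (lamX n x) k).coeff (r:ℕ))).const_sub
      ((X * Pm (n+1) (lamX n x) k).coeff (r:ℕ))).deriv
  rw [h]
  have hx : x (colL k) = lamX n x k := rfl
  rw [hx]; ring

lemma entry_EW (l : ℝ) (x : Fin (2*(n+1)-1) → ℝ) (r : Fin (n+1)) (j : Fin n) :
    deriv (fun t => kappaReImH (n+1) l (Function.update x (colW j) t) (rowE r)) (x (colW j))
      = 0 := by
  have hfun : (fun t => kappaReImH (n+1) l (Function.update x (colW j) t) (rowE r))
      = fun _ => (Am (n+1) (lamX n x)).coeff (r:ℕ) := by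
    funext t; rw [reim_even, lamX_update_colW]
  rw [hfun, deriv_const]

lemma hasDerivAt_wX (x : Fin (2*(n+1)-1) → ℝ) (j : Fin n) (j' : Fin (n+1)) (t : ℝ) :
    HasDerivAt (fun t => wX n (Function.update x (colW j) t) j')
      ((if j' = Fin.castSucc j then 1 else 0) - (if j' = Fin.last n then 1 else 0)) t := by
  by_cases h1 : (j' : ℕ) < n
  · have hlast : j' ≠ Fin.last n := by
      simp only [ne_eq, Fin.ext_iff, Fin.val_last]; omega
    simp only [wX, dif_pos h1, if_neg hlast, sub_zero]
    rcases eq_or_ne j' (Fin.castSucc j) with rfl | hne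
    · have heq : (⟨(n+1) + ((Fin.castSucc j : Fin (n+1)) : ℕ), by omega⟩ : Fin (2*(n+1)-1))
          = colW j := by
        simp [colW, Fin.ext_iff]
      rw [if_pos rfl]
      have hfun2 : (fun t => Function.update x (colW j) t
          (⟨(n+1) + ((Fin.castSucc j : Fin (n+1)) : ℕ), by omega⟩ : Fin (2*(n+1)-1)))
          = fun t => t := funext fun t => by rw [heq, Function.update_self]
      rw [hfun2]
      exact hasDerivAt_id' t
    · have hne2 : (⟨(n+1) + (j' : ℕ), by omega⟩ : Fin (2*(n+1)-1)) ≠ colW j := by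
        simp only [colW, ne_eq, Fin.mk.injEq, add_right_inj]
        intro h
        exact hne (by simp [Fin.ext_iff, h])
      rw [if_neg hne]
      have hfun2 : (fun t => Function.update x (colW j) t
          (⟨(n+1) + (j' : ℕ), by omega⟩ : Fin (2*(n+1)-1)))
          = fun _ => x (⟨(n+1) + (j' : ℕ), by omega⟩ : Fin (2*(n+1)-1)) :=
        funext fun t => Function.update_of_ne hne2 _ _
      rw [hfun2]
      exact hasDerivAt_const t _
  · have hj' : j' = Fin.last n := by
      simp only [Fin.ext_iff, Fin.val_last]; omega
    have hc : j' ≠ Fin.castSucc j := by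
      simp only [ne_eq, Fin.ext_iff, Fin.coe_castSucc]; omega
    simp only [wX, dif_neg h1, if_neg hc, if_pos hj', zero_sub]
    have hsum : HasDerivAt (fun t => ∑ k : Fin n,
        (Function.update x (colW j) t) ⟨(n+1) + (k : ℕ), by have := k.isLt; omega⟩)
        (∑ k : Fin n, if k = j then 1 else 0) t := by
      refine HasDerivAt.fun_sum fun k _ => ?_
      rcases eq_or_ne k j with rfl | hkj
      · have heq : (⟨(n+1) + (k : ℕ), by have := k.isLt; omega⟩ : Fin (2*(n+1)-1))
            = colW k := rfl
        rw [if_pos rfl]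
        have hfun2 : (fun t => Function.update x (colW k) t
            (⟨(n+1) + (k : ℕ), by have := k.isLt; omega⟩ : Fin (2*(n+1)-1)))
            = fun t => t := funext fun t => by rw [heq, Function.update_self]
        rw [hfun2]
        exact hasDerivAt_id' t
      · have hne2 : (⟨(n+1) + (k : ℕ), by have := k.isLt; omega⟩ : Fin (2*(n+1)-1))
            ≠ colW j := by
          simp only [colW, ne_eq, Fin.mk.injEq, add_right_inj]
          intro h; exact hkj (Fin.ext h)
        rw [if_neg hkj]
        have hfun2 : (fun t => Function.update x (colW j) t
            (⟨(n+1) + (k : ℕ), by have := k.isLt; omega⟩ : Fin (2*(n+1)-1)))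
            = fun _ => x (⟨(n+1) + (k : ℕ), by have := k.isLt; omega⟩ : Fin (2*(n+1)-1)) :=
          funext fun t => Function.update_of_ne hne2 _ _
        rw [hfun2]
        exact hasDerivAt_const t _
    rw [Finset.sum_ite_eq' Finset.univ j (fun _ => (1:ℝ)), if_pos (Finset.mem_univ j)] at hsum
    exact hsum.const_sub 1

lemma entry_OW (l : ℝ) (x : Fin (2*(n+1)-1) → ℝ) (r : Fin n) (j : Fin n) :
    deriv (fun t => kappaReImH (n+1) l (Function.update x (colW j) t) (rowO r)) (x (colW j))
      = -(l * ((Pm (n+1) (lamX n x) (Fin.castSucc j)).coeff (r:ℕ)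
          - (Pm (n+1) (lamX n x) (Fin.last n)).coeff (r:ℕ))) := by
  set c : Fin (n+1) → ℝ := fun j' => (Pm (n+1) (lamX n x) j').coeff (r:ℕ) with hc
  have hfun : (fun t => kappaReImH (n+1) l (Function.update x (colW j) t) (rowO r))
      = fun t => -(l * ∑ j' : Fin (n+1), wX n (Function.update x (colW j) t) j' * c j') := by
    funext t
    rw [reim_odd, lamX_update_colW, Bm, Polynomial.finset_sum_coeff]
    simp only [coeff_C_mul, hc]
  rw [hfun]
  have hd : HasDerivAt (fun t => -(l * ∑ j' : Fin (n+1),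
      wX n (Function.update x (colW j) t) j' * c j'))
      (-(l * ∑ j' : Fin (n+1), ((if j' = Fin.castSucc j then 1 else 0)
        - (if j' = Fin.last n then 1 else 0)) * c j')) (x (colW j)) := by
    exact ((HasDerivAt.fun_sum fun j' _ =>
      (hasDerivAt_wX x j j' (x (colW j))).mul_const (c j')).const_mul l).neg
  rw [hd.deriv]
  congr 1
  congr 1
  rw [Finset.sum_congr rfl (fun j' _ => sub_mul _ _ (c j')), Finset.sum_sub_distrib]
  simp only [ite_mul, one_mul, zero_mul]
  rw [Finset.sum_ite_eq' Finset.univ (Fin.castSucc j) c,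
    Finset.sum_ite_eq' Finset.univ (Fin.last n) c]
  simp [hc]

end JacNH
namespace JacNH
variable {n : ℕ}

lemma abs_det_submatrix {α : Type*} [Fintype α] [DecidableEq α] {N : ℕ}
    (M : Matrix (Fin N) (Fin N) ℝ) (e f : α ≃ Fin N) :
    |(M.submatrix e f).det| = |M.det| := by
  have h : M.submatrix e f = (M.submatrix f f).submatrix (e.trans f.symm) id := by
    ext i j; simp [Matrix.submatrix_apply]
  rw [h, Matrix.det_permute (e.trans f.symm), abs_mul,
    Matrix.det_submatrix_equiv_self f M]
  rcases Int.units_eq_one_or (Equiv.Perm.sign (e.trans f.symm)) with hs | hs <;>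
    simp [hs]

lemma Pm_natDegree_lt (lam : Fin (n+1) → ℝ) (k : Fin (n+1)) :
    (Pm (n+1) lam k).natDegree < n+1 := by
  have h1 : ∑ j ∈ Finset.univ.erase k, (X - C (lam j ^ 2)).natDegree = n := by
    rw [Finset.sum_congr rfl (fun j _ => Polynomial.natDegree_X_sub_C (lam j ^ 2)),
      Finset.sum_const, smul_eq_mul, mul_one, Finset.card_erase_of_mem (Finset.mem_univ k),
      Finset.card_univ, Fintype.card_fin, Nat.add_sub_cancel]
  have h2 := Polynomial.natDegree_prod_le (Finset.univ.erase k)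
    (fun j => X - C (lam j ^ 2))
  rw [h1] at h2
  rw [Pm]
  exact Nat.lt_succ_of_le h2

lemma Pm_coeff_last (lam : Fin (n+1) → ℝ) (k : Fin (n+1)) :
    (Pm (n+1) lam k).coeff n = 1 := by
  have hm : (Pm (n+1) lam k).Monic :=
    Polynomial.monic_prod_of_monic _ _ fun j _ => Polynomial.monic_X_sub_C _
  have hd : (Pm (n+1) lam k).natDegree = n := by
    rw [Pm, Polynomial.natDegree_prod _ _ fun j _ => Polynomial.X_sub_C_ne_zero _]
    rw [Finset.sum_congr rfl (fun j _ => Polynomial.natDegree_X_sub_C (lam j ^ 2)),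
      Finset.sum_const, smul_eq_mul, mul_one, Finset.card_erase_of_mem (Finset.mem_univ k),
      Finset.card_univ, Fintype.card_fin, Nat.add_sub_cancel]
  have hc := hm.coeff_natDegree
  rwa [hd] at hc

lemma abs_det_Mmat (lam : Fin (n+1) → ℝ)
    (hinj : Function.Injective fun k : Fin (n+1) => lam k ^ 2) :
    |(Matrix.of fun r k : Fin (n+1) => (Pm (n+1) lam k).coeff (r:ℕ)).det|
      = ∏ i : Fin (n+1), ∏ j ∈ Finset.Ioi i, |lam i ^ 2 - lam j ^ 2| := by
  set μ : Fin (n+1) → ℝ := fun k => lam k ^ 2 with hμ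
  set Mm : Matrix (Fin (n+1)) (Fin (n+1)) ℝ :=
    Matrix.of fun r k => (Pm (n+1) lam k).coeff (r:ℕ) with hMm
  have hMW : Mmᵀ * (Matrix.vandermonde μ)ᵀ
      = Matrix.diagonal fun k => ∏ k'' ∈ Finset.univ.erase k, (μ k - μ k'') := by
    ext k k'
    rw [Matrix.mul_apply]
    simp only [Matrix.transpose_apply, Matrix.of_apply, Matrix.vandermonde_apply, hMm]
    have hsum : ∑ r : Fin (n+1), (Pm (n+1) lam k).coeff (r:ℕ) * μ k' ^ (r:ℕ)
        = (Pm (n+1) lam k).eval (μ k') := by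
      rw [Polynomial.eval_eq_sum_range' (Pm_natDegree_lt lam k), ← Fin.sum_univ_eq_sum_range]
    rw [hsum, Pm, Polynomial.eval_prod]
    simp only [Polynomial.eval_sub, Polynomial.eval_X, Polynomial.eval_C]
    rcases eq_or_ne k' k with rfl | hne
    · rw [Matrix.diagonal_apply_eq]
    · rw [Matrix.diagonal_apply_ne _ (Ne.symm hne)]
      exact Finset.prod_eq_zero (Finset.mem_erase.mpr ⟨hne, Finset.mem_univ _⟩) (sub_self _)
  have hdet := congrArg Matrix.det hMW
  rw [Matrix.det_mul, Matrix.det_transpose, Matrix.det_transpose, Matrix.det_diagonal] at hdet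
  have habs := congrArg abs hdet
  rw [abs_mul] at habs
  have hvd : |(Matrix.vandermonde μ).det| = ∏ i, ∏ j ∈ Finset.Ioi i, |μ i - μ j| := by
    rw [Matrix.det_vandermonde, Finset.abs_prod]
    refine Finset.prod_congr rfl fun i _ => ?_
    rw [Finset.abs_prod]
    exact Finset.prod_congr rfl fun j _ => abs_sub_comm _ _
  have hprod : |∏ k, ∏ k'' ∈ Finset.univ.erase k, (μ k - μ k'')|
      = (∏ i, ∏ j ∈ Finset.Ioi i, |μ i - μ j|)^2 := by
    rw [Finset.abs_prod]
    have hoff := Finset.prod_prod_Ioi_mul_eq_prod_prod_off_diag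
      (fun a b : Fin (n+1) => |μ b - μ a|)
    simp only [Finset.compl_singleton] at hoff
    calc ∏ k, |∏ k'' ∈ Finset.univ.erase k, (μ k - μ k'')|
        = ∏ k, ∏ k'' ∈ Finset.univ.erase k, |μ k - μ k''| :=
          Finset.prod_congr rfl fun k _ => Finset.abs_prod _ _
      _ = ∏ i, ∏ j ∈ Finset.Ioi i, (|μ i - μ j| * |μ j - μ i|) := by
          convert hoff.symm using 2
      _ = (∏ i, ∏ j ∈ Finset.Ioi i, |μ i - μ j|)^2 := by
          rw [← Finset.prod_pow]
          refine Finset.prod_congr rfl fun i _ => ?_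
          rw [← Finset.prod_pow]
          refine Finset.prod_congr rfl fun j _ => ?_
          rw [sq, abs_sub_comm (μ j)]
  rw [hvd, hprod] at habs
  have hne : (∏ i, ∏ j ∈ Finset.Ioi i, |μ i - μ j|) ≠ 0 := by
    refine Finset.prod_ne_zero_iff.mpr fun i _ => Finset.prod_ne_zero_iff.mpr fun j hj => ?_
    have : i ≠ j := ne_of_lt (Finset.mem_Ioi.mp hj)
    exact abs_ne_zero.mpr (sub_ne_zero.mpr fun h => this (hinj h))
  rw [sq] at habs
  have hfin := mul_right_cancel₀ hne habs
  simpa only [hμ] using hfin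

end JacNH
namespace JacNH
variable {n : ℕ}

lemma det_Mmat_shift (lam : Fin (n+1) → ℝ) :
    (Matrix.of fun r j : Fin n =>
        (Pm (n+1) lam (Fin.castSucc j)).coeff (r:ℕ)
          - (Pm (n+1) lam (Fin.last n)).coeff (r:ℕ)).det
      = (Matrix.of fun r k : Fin (n+1) => (Pm (n+1) lam k).coeff (r:ℕ)).det := by
  set Mm : Matrix (Fin (n+1)) (Fin (n+1)) ℝ :=
    Matrix.of fun r k => (Pm (n+1) lam k).coeff (r:ℕ) with hMm
  set E : Matrix (Fin (n+1)) (Fin (n+1)) ℝ :=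
    Matrix.of fun k j => if k = j then (1:ℝ)
      else if j ≠ Fin.last n ∧ k = Fin.last n then -1 else 0 with hE
  have hdetE : E.det = 1 := by
    have htri : E.BlockTriangular OrderDual.toDual := by
      intro i j hij
      have hij' : i < j := hij
      simp only [hE, Matrix.of_apply]
      rw [if_neg (Fin.ne_of_lt hij'), if_neg]
      rintro ⟨h1, h2⟩
      rw [h2] at hij'
      exact absurd hij' (not_lt.mpr (Fin.le_last j))
    rw [Matrix.det_of_lowerTriangular E htri]
    simp [hE]
  set N : Matrix (Fin (n+1)) (Fin (n+1)) ℝ :=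
    Matrix.of fun r j => if j = Fin.last n then Mm r (Fin.last n)
      else Mm r j - Mm r (Fin.last n) with hN
  have hMN : Mm * E = N := by
    ext r j
    rw [Matrix.mul_apply]
    rcases eq_or_ne j (Fin.last n) with rfl | hj
    · have hterm : ∀ k, Mm r k * E k (Fin.last n)
          = if k = Fin.last n then Mm r k else 0 := by
        intro k
        rcases eq_or_ne k (Fin.last n) with rfl | hk
        · simp [hE]
        · simp [hE, hk]
      rw [Finset.sum_congr rfl fun k _ => hterm k, Finset.sum_ite_eq' Finset.univ]
      simp [hN]
    · have hterm : ∀ k, Mm r k * E k j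
          = (if k = j then Mm r k else 0) + (if k = Fin.last n then -(Mm r k) else 0) := by
        intro k
        rcases eq_or_ne k j with rfl | hk1
        · have : k ≠ Fin.last n := hj
          simp [hE, this]
        · rcases eq_or_ne k (Fin.last n) with rfl | hk2
          · simp [hE, hk1, hj]
          · simp [hE, hk1, hk2]
      rw [Finset.sum_congr rfl fun k _ => hterm k, Finset.sum_add_distrib,
        Finset.sum_ite_eq' Finset.univ, Finset.sum_ite_eq' Finset.univ]
      simp [hN, hj, sub_eq_add_neg]
  have hdetN : N.det = Mm.det := by rw [← hMN, Matrix.det_mul, hdetE, mul_one]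
  have hsub : N.submatrix (finSumFinEquiv : Fin n ⊕ Fin 1 ≃ Fin (n+1)) finSumFinEquiv
      = Matrix.fromBlocks
          (Matrix.of fun r j : Fin n => (Pm (n+1) lam (Fin.castSucc j)).coeff (r:ℕ)
            - (Pm (n+1) lam (Fin.last n)).coeff (r:ℕ))
          (Matrix.of fun (r : Fin n) (_ : Fin 1) => Mm (Fin.castSucc r) (Fin.last n))
          0
          (Matrix.of fun (_ _ : Fin 1) => (1:ℝ)) := by
    have hlastsum : ∀ j : Fin 1, (finSumFinEquiv : Fin n ⊕ Fin 1 ≃ Fin (n+1)) (Sum.inr j)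
        = Fin.last n := by
      intro j
      have : (j : ℕ) = 0 := by omega
      simp [finSumFinEquiv_apply_right, Fin.ext_iff, this]
    have hleft : ∀ j : Fin n, (finSumFinEquiv : Fin n ⊕ Fin 1 ≃ Fin (n+1)) (Sum.inl j)
        = Fin.castSucc j := by
      intro j; simp [finSumFinEquiv_apply_left, Fin.ext_iff]
    have hMmlast : ∀ k, Mm (Fin.last n) k = 1 := by
      intro k
      have : Mm (Fin.last n) k = (Pm (n+1) lam k).coeff n := rfl
      rw [this, Pm_coeff_last]
    ext (r | r) (j | j)
    · have hne : Fin.castSucc j ≠ Fin.last n := Fin.ne_of_lt (Fin.castSucc_lt_last j)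
      simp only [Matrix.submatrix_apply, hleft, Matrix.fromBlocks_apply₁₁, hN,
        Matrix.of_apply, if_neg hne]
      rfl
    · simp only [Matrix.submatrix_apply, hleft, hlastsum, Matrix.fromBlocks_apply₁₂, hN,
        Matrix.of_apply, if_pos rfl]
      simp
    · have hne : Fin.castSucc j ≠ Fin.last n := Fin.ne_of_lt (Fin.castSucc_lt_last j)
      simp only [Matrix.submatrix_apply, hleft, hlastsum, Matrix.fromBlocks_apply₂₁, hN,
        Matrix.of_apply, if_neg hne, Matrix.zero_apply]
      rw [hMmlast, hMmlast, sub_self]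
    · simp only [Matrix.submatrix_apply, hlastsum, Matrix.fromBlocks_apply₂₂, hN,
        Matrix.of_apply, if_pos rfl]
      simp only [if_true]
      rw [hMmlast]
  have h3 := Matrix.det_submatrix_equiv_self
    (finSumFinEquiv : Fin n ⊕ Fin 1 ≃ Fin (n+1)) N
  rw [hsub] at h3
  rw [← hdetN, ← h3, Matrix.det_fromBlocks_zero₂₁, Matrix.det_fin_one]
  simp

def eRow (n : ℕ) : (Fin (n+1) ⊕ Fin n) ≃ Fin (2*(n+1)-1) where
  toFun s := Sum.elim (fun r => rowE r) (fun r => rowO r) s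
  invFun i := if h : (i:ℕ) % 2 = 0 then Sum.inl ⟨(i:ℕ)/2, by have := i.isLt; omega⟩
      else Sum.inr ⟨(i:ℕ)/2, by have := i.isLt; omega⟩
  left_inv := by
    rintro (r | r)
    · simp only [Sum.elim_inl, rowE]
      simp only [show 2 * (r:ℕ) % 2 = 0 by omega, ↓reduceDIte]
      simp only [Sum.inl.injEq, Fin.ext_iff]
      omega
    · simp only [Sum.elim_inr, rowO]
      simp only [show ¬ ((2 * (r:ℕ) + 1) % 2 = 0) by omega, ↓reduceDIte]
      simp only [Sum.inr.injEq, Fin.ext_iff]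
      omega
  right_inv := by
    intro i
    by_cases h : (i:ℕ) % 2 = 0
    · simp only [dif_pos h, Sum.elim_inl, rowE, Fin.ext_iff]
      omega
    · simp only [dif_neg h, Sum.elim_inr, rowO, Fin.ext_iff]
      omega

def eCol (n : ℕ) : (Fin (n+1) ⊕ Fin n) ≃ Fin (2*(n+1)-1) where
  toFun s := Sum.elim (fun k => colL k) (fun j => colW j) s
  invFun i := if h : (i:ℕ) < n+1 then Sum.inl ⟨(i:ℕ), h⟩
      else Sum.inr ⟨(i:ℕ)-(n+1), by have := i.isLt; omega⟩
  left_inv := by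
    rintro (k | j)
    · simp only [Sum.elim_inl, colL]
      simp only [show (k:ℕ) < n+1 from k.isLt, ↓reduceDIte, Fin.eta]
    · simp only [Sum.elim_inr, colW]
      simp only [show ¬ (n + 1 + (j:ℕ) < n + 1) by omega, ↓reduceDIte]
      simp only [Sum.inr.injEq, Fin.ext_iff]
      omega
  right_inv := by
    intro i
    by_cases h : (i:ℕ) < n+1
    · simp only [dif_pos h, Sum.elim_inl, colL]
    · simp only [dif_neg h, Sum.elim_inr, colW, Fin.ext_iff]
      omega

end JacNH

open JacNH

/-- for `det(zI - 𝒥 - i·l·I₁ₓ₁)` in the even case, the even-index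
coefficients are real and the odd-index coefficients purely imaginary, and the Jacobian of
`(λ₁,…,λ_m, w₁,…,w_{m-1}) ↦ (Re κ₀, Im κ₁, …, Im κ_{2m-3}, Re κ_{2m-2})` has absolute
value `2^m l^{m-1} ∏ λ_j ∏_{j<k} |λ_j² - λ_k²|²`. -/
theorem jacobian_nonhermitian_even (m : ℕ) (hm : 1 ≤ m) (l : ℝ) (hl : 0 < l)
    (x : Fin (2 * m - 1) → ℝ)
    (lam : Fin m → ℝ) (hlam : lam = fun j : Fin m => x ⟨(j : ℕ), by have := j.isLt; omega⟩)
    (hord : StrictAnti lam) (hpos : ∀ j, 0 < lam j)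
    (hwpos : ∀ j : Fin (m - 1), 0 < x ⟨m + (j : ℕ), by have := j.isLt; omega⟩)
    (hwsum : ∑ j : Fin (m - 1), x ⟨m + (j : ℕ), by have := j.isLt; omega⟩ < 1) :
    (∀ j : ℕ, ((kappaMapHC m l x).coeff (2 * j)).im = 0 ∧
      ((kappaMapHC m l x).coeff (2 * j + 1)).re = 0) ∧
    |(Matrix.of fun i j : Fin (2 * m - 1) =>
        deriv (fun t => kappaReImH m l (Function.update x j t) i) (x j)).det| =
      2 ^ m * l ^ (m - 1) * (∏ j, lam j) *
        ∏ j : Fin m, ∏ k ∈ Finset.Ioi j, |lam j ^ 2 - lam k ^ 2| ^ 2 := by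
  obtain ⟨n, rfl⟩ : ∃ n, m = n + 1 := ⟨m - 1, by omega⟩
  constructor
  · intro j
    rw [kappaMapHC_eq]
    exact ⟨by rw [coeff_even]; exact Complex.ofReal_im _,
      by rw [coeff_odd]; simp⟩
  · have hlamX : lam = lamX n x := hlam
    have hstrict : StrictAnti fun k : Fin (n+1) => lam k ^ 2 := by
      intro a b hab
      have h1 := hord hab
      have h2 := hpos b
      have h3 := hpos a
      simp only
      nlinarith
    have hinj := hstrict.injective
    have hblocks : (Matrix.of fun i j : Fin (2 * (n+1) - 1) =>
          deriv (fun t => kappaReImH (n+1) l (Function.update x j t) i) (x j)).submatrix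
            (eRow n) (eCol n)
        = Matrix.fromBlocks
            ((Matrix.of fun r k : Fin (n+1) => (Pm (n+1) lam k).coeff (r:ℕ))
              * Matrix.diagonal fun k => -2 * lam k)
            0
            (Matrix.of fun (r : Fin n) (k : Fin (n+1)) =>
              deriv (fun t => kappaReImH (n+1) l (Function.update x (colL k) t) (rowO r))
                (x (colL k)))
            ((-l) • Matrix.of (fun r j : Fin n =>
              (Pm (n+1) lam (Fin.castSucc j)).coeff (r:ℕ)
                - (Pm (n+1) lam (Fin.last n)).coeff (r:ℕ))) := by
      ext (r | r) (k | j)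
      · simp only [Matrix.submatrix_apply, eRow, eCol, Equiv.coe_fn_mk, Sum.elim_inl,
          Matrix.fromBlocks_apply₁₁, Matrix.mul_diagonal, Matrix.of_apply]
        rw [entry_EL, ← hlamX]
        ring
      · simp only [Matrix.submatrix_apply, eRow, eCol, Equiv.coe_fn_mk, Sum.elim_inl,
          Sum.elim_inr, Matrix.fromBlocks_apply₁₂, Matrix.of_apply, Matrix.zero_apply]
        exact entry_EW l x r j
      · simp only [Matrix.submatrix_apply, eRow, eCol, Equiv.coe_fn_mk, Sum.elim_inl,
          Sum.elim_inr, Matrix.fromBlocks_apply₂₁, Matrix.of_apply]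
      · simp only [Matrix.submatrix_apply, eRow, eCol, Equiv.coe_fn_mk, Sum.elim_inr,
          Matrix.fromBlocks_apply₂₂, Matrix.smul_apply, Matrix.of_apply, smul_eq_mul]
        rw [entry_OW, ← hlamX]
        ring
    have habs0 : |(Matrix.of fun i j : Fin (2 * (n+1) - 1) =>
          deriv (fun t => kappaReImH (n+1) l (Function.update x j t) i) (x j)).det|
        = |((Matrix.of fun i j : Fin (2 * (n+1) - 1) =>
          deriv (fun t => kappaReImH (n+1) l (Function.update x j t) i) (x j)).submatrix
            (eRow n) (eCol n)).det| := (abs_det_submatrix _ _ _).symm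
    rw [habs0, hblocks, Matrix.det_fromBlocks_zero₁₂, Matrix.det_mul, Matrix.det_diagonal,
      Matrix.det_smul, det_Mmat_shift, abs_mul, abs_mul, abs_mul, abs_pow, abs_neg,
      abs_of_pos hl, abs_det_Mmat lam hinj]
    have h2lam : |∏ k : Fin (n+1), (-2 * lam k)| = 2^(n+1) * ∏ k, lam k := by
      rw [Finset.abs_prod,
        Finset.prod_congr rfl fun k _ => by
          rw [abs_mul, abs_neg, abs_two, abs_of_pos (hpos k)],
        Finset.prod_mul_distrib, Finset.prod_const, Finset.card_univ, Fintype.card_fin]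
    rw [h2lam, Fintype.card_fin]
    have hsq : (∏ i : Fin (n+1), ∏ j ∈ Finset.Ioi i, |lam i^2 - lam j^2|)
        * (∏ i : Fin (n+1), ∏ j ∈ Finset.Ioi i, |lam i^2 - lam j^2|)
        = ∏ i : Fin (n+1), ∏ j ∈ Finset.Ioi i, |lam i^2 - lam j^2|^2 := by
      rw [← sq, ← Finset.prod_pow]
      exact Finset.prod_congr rfl fun i _ => (Finset.prod_pow _ _ _).symm
    have hfin : (n + 1) - 1 = n := by omega
    rw [hfin, ← hsq]
    ring
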